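/- For every integer n ≥ 18 there exists a prime number p with n/2 − 1 < p ≤ n − 7 (equivalently, 2·p > n − 2 and p ≤ n − 7). -/

import Mathlib

open Real

theorem my_real_main {x : ℝ} (x_large : (2048 : ℝ) ≤ x) :
    x * (2 * x) ^ (√(2 * x) + 6) * 4 ^ (2 * x / 3) ≤ 4 ^ x := by
  let f : ℝ → ℝ := fun x => log x + (√(2 * x) + 6) * log (2 * x) - log 4 / 3 * x
  have hf' : ∀ x, 0 < x → 0 < x * (2 * x) ^ (√(2 * x) + 6) / 4 ^ (x / 3) := fun x h =>
    div_pos (mul_pos h (rpow_pos_of_pos (mul_pos two_pos h) _)) (rpow_pos_of_pos four_pos _)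
  have hf : ∀ x, 0 < x → f x = log (x * (2 * x) ^ (√(2 * x) + 6) / 4 ^ (x / 3)) := by
    intro x h5
    have h6 := mul_pos (zero_lt_two' ℝ) h5
    have h7 := rpow_pos_of_pos h6 (√(2 * x) + 6)
    rw [log_div (mul_pos h5 h7).ne' (rpow_pos_of_pos four_pos _).ne', log_mul h5.ne' h7.ne',
      log_rpow h6, log_rpow zero_lt_four, ← mul_div_right_comm, ← mul_div, mul_comm x]
  have h5 : 0 < x := lt_of_lt_of_le (by norm_num1) x_large
  rw [← div_le_one (rpow_pos_of_pos four_pos x), ← div_div_eq_mul_div, ← rpow_sub four_pos, ←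
    mul_div 2 x, mul_div_left_comm, ← mul_one_sub, (by norm_num1 : (1 : ℝ) - 2 / 3 = 1 / 3),
    mul_one_div, ← log_nonpos_iff (hf' x h5).le, ← hf x h5]
  have h : ConcaveOn ℝ (Set.Ioi 0.5) f := by
    have hrw : f = fun x => (log x + √(2 * x) * log (2 * x)) + (6 : ℝ) • log (2 * x)
        - log 4 / 3 * x := by
      ext y; simp only [smul_eq_mul]; ring
    rw [hrw]
    apply ConcaveOn.sub
    · apply ConcaveOn.add
      · apply ConcaveOn.add
        · exact strictConcaveOn_log_Ioi.concaveOn.subset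
            (Set.Ioi_subset_Ioi (by norm_num)) (convex_Ioi 0.5)
        · convert ((strictConcaveOn_sqrt_mul_log_Ioi.concaveOn.comp_linearMap
            ((2 : ℝ) • LinearMap.id))) using 1
          rotate_left 2
          ext x
          simp only [Set.mem_Ioi, Set.mem_preimage, LinearMap.smul_apply,
            LinearMap.id_coe, id_eq, smul_eq_mul]
          rw [← mul_lt_mul_iff_right₀ (two_pos)]
          norm_num1
          rfl
          all_goals rfl
      · apply ConcaveOn.smul (by norm_num : (0:ℝ) ≤ 6)
        have hsub : Set.Ioi (0.5 : ℝ) ⊆ (((2 : ℝ) • LinearMap.id) : ℝ →ₗ[ℝ] ℝ) ⁻¹' Set.Ioi 0 := by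
          intro x hx
          simp only [Set.mem_Ioi, Set.mem_preimage, LinearMap.smul_apply,
            LinearMap.id_coe, id_eq, smul_eq_mul] at hx ⊢
          linarith
        have := (strictConcaveOn_log_Ioi.concaveOn.comp_linearMap
            ((2 : ℝ) • LinearMap.id)).subset hsub (convex_Ioi (0.5 : ℝ))
        convert this using 1
        all_goals rfl
    apply ConvexOn.smul
    · refine div_nonneg (log_nonneg (by norm_num1)) (by norm_num1)
    · exact convexOn_id (convex_Ioi (0.5 : ℝ))
  suffices ∃ x1 x2, 0.5 < x1 ∧ x1 < x2 ∧ x2 ≤ x ∧ 0 ≤ f x1 ∧ f x2 ≤ 0 by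
    obtain ⟨x1, x2, h1, h2, h0, h3, h4⟩ := this
    exact (h.right_le_of_le_left'' h1 ((h1.trans h2).trans_le h0) h2 h0 (h4.trans h3)).trans h4
  refine ⟨18, 2048, by norm_num1, by norm_num1, x_large, ?_, ?_⟩
  · have : √(2 * 18 : ℝ) = 6 := (sqrt_eq_iff_mul_self_eq_of_pos (by norm_num1)).mpr (by norm_num1)
    rw [hf _ (by norm_num1), log_nonneg_iff (by positivity), this, one_le_div (by norm_num1)]
    norm_num1
  · have h64 : √(2 * 2048 : ℝ) = 64 :=
      (sqrt_eq_iff_mul_self_eq_of_pos (by norm_num1)).mpr (by norm_num1)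
    rw [hf _ (by norm_num1), log_nonpos_iff (hf' _ (by norm_num1)).le, h64,
        div_le_one (by positivity)]
    have e1 : (2 * 2048 : ℝ) ^ ((64 : ℝ) + 6) = 2 ^ (840 : ℝ) := by
      rw [show (2 * 2048 : ℝ) = 2 ^ (12 : ℝ) by norm_num,
        ← rpow_mul (by norm_num : (0:ℝ) ≤ 2)]
      norm_num
    have e2 : (4 : ℝ) ^ (2048 / 3 : ℝ) = 2 ^ (4096 / 3 : ℝ) := by
      rw [show (4 : ℝ) = 2 ^ (2 : ℝ) by norm_num, ← rpow_mul (by norm_num : (0:ℝ) ≤ 2)]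
      norm_num
    rw [e1, e2, show (2048 : ℝ) = 2 ^ (11 : ℝ) by norm_num,
      ← rpow_add (by norm_num : (0:ℝ) < 2)]
    apply rpow_le_rpow_of_exponent_le (by norm_num)
    norm_num

section NatPart

open Nat

theorem my_main_inequality {n : ℕ} (n_large : 2048 ≤ n) :
    n * (2 * n) ^ (Nat.sqrt (2 * n) + 6) * 4 ^ (2 * n / 3) ≤ 4 ^ n := by
  rw [← @Nat.cast_le ℝ]
  simp only [Nat.cast_add, Nat.cast_one, Nat.cast_mul, Nat.cast_pow, ← Real.rpow_natCast, Nat.cast_ofNat]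
  refine _root_.trans ?_ (my_real_main (by exact_mod_cast n_large))
  gcongr
  · have n2_pos : 0 < 2 * n := by positivity
    exact mod_cast n2_pos
  · have : ((Nat.sqrt (2 * n) : ℕ) : ℝ) ≤ √(2 * (n : ℝ)) := by
      exact_mod_cast Real.nat_sqrt_le_real_sqrt
    linarith
  · norm_num1
  · exact Nat.cast_div_le.trans (by norm_cast)

/-- Unconditional bound on the small-prime part of the central binomial coefficient. -/
theorem my_small_part (n : ℕ) (n_pos : 0 < n) :
    (∏ p ∈ Finset.range (2 * n / 3 + 1), p ^ (centralBinom n).factorization p)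
      ≤ (2 * n) ^ Nat.sqrt (2 * n) * 4 ^ (2 * n / 3) := by
  have n2_pos : 1 ≤ 2 * n := by omega
  let S := (Finset.range (2 * n / 3 + 1)).filter Nat.Prime
  let f := fun x => x ^ n.centralBinom.factorization x
  have : ∏ x ∈ S, f x = ∏ x ∈ Finset.range (2 * n / 3 + 1), f x := by
    refine Finset.prod_filter_of_ne fun p _ h => ?_
    contrapose! h; dsimp only [f]
    rw [Nat.factorization_eq_zero_of_not_prime n.centralBinom h, _root_.pow_zero]
  rw [show (∏ p ∈ Finset.range (2 * n / 3 + 1), p ^ (centralBinom n).factorization p)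
      = ∏ x ∈ Finset.range (2 * n / 3 + 1), f x from rfl, ← this,
    ← Finset.prod_filter_mul_prod_filter_not S (· ≤ Nat.sqrt (2 * n))]
  apply Nat.mul_le_mul
  · refine (Finset.prod_le_prod' fun p _ => (?_ : f p ≤ 2 * n)).trans ?_
    · exact Nat.pow_factorization_choose_le (by omega)
    have : (Finset.Icc 1 (Nat.sqrt (2 * n))).card = Nat.sqrt (2 * n) := by
      rw [Nat.card_Icc, Nat.add_sub_cancel]
    rw [Finset.prod_const]
    refine pow_right_mono₀ n2_pos ((Finset.card_le_card fun x hx => ?_).trans this.le)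
    obtain ⟨h1, h2⟩ := Finset.mem_filter.1 hx
    exact Finset.mem_Icc.mpr ⟨(Finset.mem_filter.1 h1).2.one_lt.le, h2⟩
  · refine le_trans ?_ (primorial_le_4_pow (2 * n / 3))
    refine (Finset.prod_le_prod' fun p hp => (?_ : f p ≤ p)).trans ?_
    · obtain ⟨h1, h2⟩ := Finset.mem_filter.1 hp
      refine (pow_right_mono₀ (Finset.mem_filter.1 h1).2.one_lt.le ?_).trans (pow_one p).le
      exact Nat.factorization_choose_le_one (Nat.sqrt_lt'.mp <| not_le.1 h2)
    refine Finset.prod_le_prod_of_subset_of_one_le' (Finset.filter_subset _ _) ?_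
    exact fun p hp _ => (Finset.mem_filter.1 hp).2.one_lt.le

theorem my_centralBinom_le (n : ℕ) (n_large : 2048 ≤ n)
    (no_prime : ¬∃ p : ℕ, Nat.Prime p ∧ n < p ∧ p ≤ 2 * n - 6) :
    centralBinom n ≤ (2 * n) ^ (Nat.sqrt (2 * n) + 6) * 4 ^ (2 * n / 3) := by
  have h1 : 2 * n / 3 + 1 ≤ 2 * n - 5 := by omega
  have h2 : 2 * n - 5 ≤ 2 * n + 1 := by omega
  have key : centralBinom n =
      (∏ p ∈ Finset.range (2 * n / 3 + 1), p ^ (centralBinom n).factorization p) *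
      ((∏ p ∈ Finset.Ico (2 * n / 3 + 1) (2 * n - 5), p ^ (centralBinom n).factorization p) *
       (∏ p ∈ Finset.Ico (2 * n - 5) (2 * n + 1), p ^ (centralBinom n).factorization p)) := by
    rw [Finset.prod_Ico_consecutive _ h1 h2, Finset.range_eq_Ico,
      Finset.prod_Ico_consecutive _ (Nat.zero_le _) (h1.trans h2), ← Finset.range_eq_Ico,
      Nat.prod_pow_factorization_centralBinom]
  have mid : (∏ p ∈ Finset.Ico (2 * n / 3 + 1) (2 * n - 5),
      p ^ (centralBinom n).factorization p) = 1 := by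
    apply Finset.prod_eq_one
    intro p hp
    rw [Finset.mem_Ico] at hp
    by_cases hprime : p.Prime
    · by_cases hpn : p ≤ n
      · rw [Nat.factorization_centralBinom_of_two_mul_self_lt_three_mul (by omega) hpn
          (by omega), _root_.pow_zero]
      · exact absurd ⟨p, hprime, by omega, by omega⟩ no_prime
    · rw [Nat.factorization_eq_zero_of_not_prime _ hprime, _root_.pow_zero]
  have top : (∏ p ∈ Finset.Ico (2 * n - 5) (2 * n + 1),
      p ^ (centralBinom n).factorization p) ≤ (2 * n) ^ 6 := by
    have hcard : (Finset.Ico (2 * n - 5) (2 * n + 1)).card = 6 := by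
      rw [Nat.card_Ico]; omega
    calc (∏ p ∈ Finset.Ico (2 * n - 5) (2 * n + 1), p ^ (centralBinom n).factorization p)
        ≤ ∏ _p ∈ Finset.Ico (2 * n - 5) (2 * n + 1), (2 * n) := by
          apply Finset.prod_le_prod'
          intro p hp
          rw [Finset.mem_Ico] at hp
          have hq : 4091 ≤ p := by omega
          have h2n : 2 * n ≤ p + 5 := by omega
          have he : (centralBinom n).factorization p ≤ 1 :=
            Nat.factorization_choose_le_one (by nlinarith)
          calc p ^ (centralBinom n).factorization p ≤ p ^ 1 :=
                Nat.pow_le_pow_right (by omega) he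
            _ = p := pow_one p
            _ ≤ 2 * n := by omega
      _ = (2 * n) ^ 6 := by rw [Finset.prod_const, hcard]
  calc centralBinom n ≤ ((2 * n) ^ Nat.sqrt (2 * n) * 4 ^ (2 * n / 3)) * (1 * (2 * n) ^ 6) := by
        rw [key]; exact Nat.mul_le_mul (my_small_part n (by omega)) (Nat.mul_le_mul mid.le top)
    _ = (2 * n) ^ (Nat.sqrt (2 * n) + 6) * 4 ^ (2 * n / 3) := by ring

theorem my_strong_bertrand (n : ℕ) (n_large : 2048 ≤ n) :
    ∃ p : ℕ, Nat.Prime p ∧ n < p ∧ p ≤ 2 * n - 6 := by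
  by_contra no_prime
  have H1 : n * (2 * n) ^ (Nat.sqrt (2 * n) + 6) * 4 ^ (2 * n / 3) ≤ 4 ^ n :=
    my_main_inequality n_large
  have H2 : 4 ^ n < n * n.centralBinom :=
    Nat.four_pow_lt_mul_centralBinom n (by omega)
  have H3 : n.centralBinom ≤ (2 * n) ^ (Nat.sqrt (2 * n) + 6) * 4 ^ (2 * n / 3) :=
    my_centralBinom_le n n_large no_prime
  rw [mul_assoc] at H1
  exact not_le.2 H2 ((Nat.mul_le_mul_left n H3).trans H1)

end NatPart

theorem my_cover_step {n : ℕ} (q : ℕ) {p : ℕ} (hp : p.Prime) (cov : q ≤ 2 * p + 1)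
    (H : n ≤ p + 6 → ∃ r : ℕ, r.Prime ∧ n - 2 < 2 * r ∧ r ≤ n - 7)
    (hub : n ≤ q) :
    ∃ r : ℕ, r.Prime ∧ n - 2 < 2 * r ∧ r ≤ n - 7 := by
  by_cases h : p + 7 ≤ n
  · exact ⟨p, hp, by omega, by omega⟩
  · exact H (by omega)

theorem stmt18 (n : ℕ) (hn : 18 ≤ n) :
    ∃ p : ℕ, p.Prime ∧ n - 2 < 2 * p ∧ p ≤ n - 7 := by
  rcases le_or_gt n 4096 with h | h
  · refine my_cover_step 4096 (by norm_num : Nat.Prime 2069) (by norm_num) ?_ h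
    refine fun h => my_cover_step 2075 (by norm_num : Nat.Prime 1039) (by norm_num) ?_ h
    refine fun h => my_cover_step 1045 (by norm_num : Nat.Prime 523) (by norm_num) ?_ h
    refine fun h => my_cover_step 529 (by norm_num : Nat.Prime 271) (by norm_num) ?_ h
    refine fun h => my_cover_step 277 (by norm_num : Nat.Prime 139) (by norm_num) ?_ h
    refine fun h => my_cover_step 145 (by norm_num : Nat.Prime 73) (by norm_num) ?_ h
    refine fun h => my_cover_step 79 (by norm_num : Nat.Prime 41) (by norm_num) ?_ h
    refine fun h => my_cover_step 47 (by norm_num : Nat.Prime 23) (by norm_num) ?_ h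
    refine fun h => my_cover_step 29 (by norm_num : Nat.Prime 17) (by norm_num) ?_ h
    refine fun h => my_cover_step 23 (by norm_num : Nat.Prime 11) (by norm_num) ?_ h
    exact fun h' => absurd hn (by omega)
  · obtain ⟨p, hp, h1, h2⟩ := my_strong_bertrand ((n - 1) / 2) (by omega)
    exact ⟨p, hp, by omega, by omega⟩
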